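/- arXiv:2411.03947 — 2 statements merged into one kernel-verified Lean document; each statement's English description precedes it below -/
import Mathlib

section
/- Let {M_i : i ∈ I} be a family of monoids. The monoid free product (coproduct) of the family {M_i : i ∈ I} is right ideal Howson if and only if each monoid M_i is right ideal Howson. -/
/-- `XS¹ = X ∪ XS` for a subset `X` of a semigroup `S`. -/
def RS1 {S : Type*} [Semigroup S] (X : Set S) : Set S :=
  X ∪ {y | ∃ x ∈ X, ∃ s : S, y = x * s}

/-- A finitely generated right ideal: a set of the form `XS¹` with `X` finite. -/
def FGRightIdeal {S : Type*} [Semigroup S] (I : Set S) : Prop :=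
  ∃ X : Finset S, I = RS1 (↑X : Set S)

/-- A semigroup is right ideal Howson if the intersection of any two finitely
generated right ideals is finitely generated. -/
def RIH (S : Type*) [Semigroup S] : Prop :=
  ∀ I J : Set S, FGRightIdeal I → FGRightIdeal J → FGRightIdeal (I ∩ J)

section Basic

variable {S : Type*} [Monoid S]

lemma mem_RS1 {X : Set S} {y : S} : y ∈ RS1 X ↔ ∃ x ∈ X, ∃ s : S, y = x * s := by
  constructor
  · rintro (hy | hy)
    · exact ⟨y, hy, 1, (mul_one y).symm⟩
    · exact hy
  · exact Or.inr

lemma mem_RS1_self {X : Set S} {x : S} (hx : x ∈ X) : x ∈ RS1 X := Or.inl hx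

lemma RS1_mul_mem {X : Set S} {y : S} (hy : y ∈ RS1 X) (s : S) : y * s ∈ RS1 X := by
  rcases mem_RS1.1 hy with ⟨x, hx, t, rfl⟩
  exact mem_RS1.2 ⟨x, hx, t * s, mul_assoc _ _ _⟩

lemma RS1_union (X Y : Set S) : RS1 (X ∪ Y) = RS1 X ∪ RS1 Y := by
  ext y
  simp only [mem_RS1, Set.mem_union, mem_RS1]
  constructor
  · rintro ⟨x, hx | hx, s, rfl⟩
    · exact Or.inl ⟨x, hx, s, rfl⟩
    · exact Or.inr ⟨x, hx, s, rfl⟩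
  · rintro (⟨x, hx, s, rfl⟩ | ⟨x, hx, s, rfl⟩)
    · exact ⟨x, Or.inl hx, s, rfl⟩
    · exact ⟨x, Or.inr hx, s, rfl⟩

lemma FG_empty : FGRightIdeal (∅ : Set S) := by
  refine ⟨∅, ?_⟩
  simp [RS1]

lemma FG_union {I J : Set S} (hI : FGRightIdeal I) (hJ : FGRightIdeal J) :
    FGRightIdeal (I ∪ J) := by
  classical
  obtain ⟨X, rfl⟩ := hI
  obtain ⟨Y, rfl⟩ := hJ
  exact ⟨X ∪ Y, by rw [Finset.coe_union, RS1_union]⟩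

lemma FG_principal (u : S) : FGRightIdeal (RS1 {u}) :=
  ⟨{u}, by simp⟩

lemma rih_of_principal
    (h : ∀ u v : S, FGRightIdeal (RS1 {u} ∩ RS1 {v})) : RIH S := by
  classical
  have step : ∀ (u : S) (Y : Finset S), FGRightIdeal (RS1 {u} ∩ RS1 (↑Y : Set S)) := by
    intro u Y
    induction Y using Finset.induction_on with
    | empty => simpa [RS1] using FG_empty
    | @insert y Y _ ih =>
      rw [Finset.coe_insert, Set.insert_eq, RS1_union, Set.inter_union_distrib_left]
      exact FG_union (h u y) ih
  rintro I J ⟨X, rfl⟩ ⟨Y, rfl⟩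
  induction X using Finset.induction_on with
  | empty => simpa [RS1] using FG_empty
  | @insert x X _ ih =>
    rw [Finset.coe_insert, Set.insert_eq, RS1_union, Set.union_inter_distrib_right]
    exact FG_union (step x Y) ih

lemma rih_retract {T : Type*} [Monoid T] (f : S →* T) (g : T →* S)
    (hfg : ∀ t, f (g t) = t) (hS : RIH S) : RIH T := by
  classical
  rintro I J ⟨X, rfl⟩ ⟨Y, rfl⟩
  obtain ⟨Z, hZ⟩ := hS (RS1 (↑(X.image g) : Set S)) (RS1 (↑(Y.image g) : Set S))
    ⟨X.image g, rfl⟩ ⟨Y.image g, rfl⟩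
  refine ⟨Z.image f, ?_⟩
  have himg : RS1 (↑(X.image g) : Set S) ∩ RS1 (↑(Y.image g) : Set S)
      = RS1 (↑Z : Set S) := hZ
  ext w
  simp only [Set.mem_inter_iff, mem_RS1, Finset.coe_image, Set.mem_image,
    Finset.mem_coe]
  constructor
  · rintro ⟨⟨x, hx, s, rfl⟩, ⟨y, hy, t, hw⟩⟩
    have hg : g (x * s) ∈ RS1 (↑Z : Set S) := by
      rw [← himg]
      constructor
      · exact mem_RS1.2 ⟨g x, by simpa using ⟨x, hx, rfl⟩, g s, by simp⟩
      · rw [hw]; exact mem_RS1.2 ⟨g y, by simpa using ⟨y, hy, rfl⟩, g t, by simp⟩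
    rcases mem_RS1.1 hg with ⟨z, hz, s', hs'⟩
    refine ⟨f z, ⟨z, hz, rfl⟩, f s', ?_⟩
    have := congrArg f hs'
    rwa [hfg, map_mul] at this
  · rintro ⟨_, ⟨z, hz, rfl⟩, s, rfl⟩
    have hzK : z ∈ RS1 (↑(X.image g) : Set S) ∩ RS1 (↑(Y.image g) : Set S) := by
      rw [himg]; exact mem_RS1_self hz
    rcases mem_RS1.1 hzK.1 with ⟨_, hx, s₁, hzx⟩
    rcases mem_RS1.1 hzK.2 with ⟨_, hy, s₂, hzy⟩
    simp only [Finset.coe_image, Set.mem_image, Finset.mem_coe] at hx hy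
    obtain ⟨x, hx, rfl⟩ := hx
    obtain ⟨y, hy, rfl⟩ := hy
    constructor
    · exact ⟨x, hx, f s₁ * s, by rw [hzx, map_mul, hfg, mul_assoc]⟩
    · exact ⟨y, hy, f s₂ * s, by rw [hzy, map_mul, hfg, mul_assoc]⟩

end Basic

section Coprod

open Monoid Monoid.CoprodI Monoid.CoprodI.Word

set_option linter.unusedSectionVars false
variable {ι : Type*} {M : ι → Type*} [DecidableEq ι] [∀ i, Monoid (M i)] [∀ i, DecidableEq (M i)]

/-- The product of a list of letters in the free product. -/
def prodList (L : List (Σ i, M i)) : Monoid.CoprodI M :=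
  (L.map fun l => Monoid.CoprodI.of l.snd).prod

@[simp] lemma prodList_nil : prodList ([] : List (Σ i, M i)) = 1 := rfl

lemma prodList_cons (x : (Σ i, M i)) (L : List (Σ i, M i)) :
    prodList (x :: L) = Monoid.CoprodI.of x.snd * prodList L := by
  simp [prodList]

lemma prodList_append (L L' : List (Σ i, M i)) :
    prodList (L ++ L') = prodList L * prodList L' := by
  simp [prodList]

lemma prod_eq_prodList (w : Word M) : w.prod = prodList w.toList := rfl

lemma prodList_equiv (u : Monoid.CoprodI M) : prodList (Word.equiv u).toList = u :=
  Word.equiv.symm_apply_apply u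

lemma equiv_prodList (w : Word M) : Word.equiv (prodList w.toList) = w :=
  Word.equiv.apply_symm_apply w

lemma equiv_of_mul {i : ι} (m : M i) (w : Word M) (hm : m ≠ 1) (hw : w.fstIdx ≠ some i) :
    (Word.equiv (Monoid.CoprodI.of m * prodList w.toList)).toList = ⟨i, m⟩ :: w.toList := by
  have h1 : Monoid.CoprodI.of m * prodList w.toList = Word.prod (Word.cons m w hw hm) := by
    rw [Word.prod_cons, prod_eq_prodList]
  rw [h1, prod_eq_prodList, equiv_prodList]
  rfl

lemma mul_list : ∀ (L : List (Σ i, M i)) (u : Monoid.CoprodI M) (i : ι) (a : M i),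
    (Word.equiv u).toList = L ++ [⟨i, a⟩] → (∀ c : M i, a * c ≠ 1) →
    ∀ s : Monoid.CoprodI M, ∃ (c : M i) (t : List (Σ i, M i)),
      (Word.equiv (u * s)).toList = L ++ ⟨i, a * c⟩ :: t := by
  intro L
  induction L with
  | nil =>
    intro u i a hu ha s
    have hu' : u = Monoid.CoprodI.of a := by
      rw [← prodList_equiv u, hu]
      simp [prodList]
    set p := Word.equivPair i (Word.equiv s) with hp
    have hs : Monoid.CoprodI.of p.head * prodList p.tail.toList = s := by
      have h1 := Word.equivPair_head_smul_equivPair_tail (i := i) (Word.equiv s)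
      have h2 := congrArg Word.prod h1
      rwa [Word.prod_smul, prod_eq_prodList, prod_eq_prodList, prodList_equiv] at h2
    refine ⟨p.head, p.tail.toList, ?_⟩
    have h3 : u * s = Monoid.CoprodI.of (a * p.head) * prodList p.tail.toList := by
      rw [hu', ← hs, ← mul_assoc, ← map_mul]
    rw [h3, equiv_of_mul _ _ (ha p.head) p.fstIdx_ne, List.nil_append]
  | cons x L ih =>
    intro u i a hu ha s
    obtain ⟨j, b⟩ := x
    rw [List.cons_append] at hu
    have hne : ∀ l ∈ L ++ [(⟨i, a⟩ : Σ i, M i)], Sigma.snd l ≠ 1 := fun l hl =>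
      (Word.equiv u).ne_one l (by rw [hu]; exact List.mem_cons_of_mem _ hl)
    have hchain0 := (Word.equiv u).chain_ne
    rw [hu] at hchain0
    have hchain : List.IsChain (fun l l' : Σ i, M i => Sigma.fst l ≠ Sigma.fst l')
        (L ++ [(⟨i, a⟩ : Σ i, M i)]) := hchain0.tail
    have hW'eq : (Word.equiv (prodList (L ++ [⟨i, a⟩]))).toList = L ++ [⟨i, a⟩] := by
      rw [show prodList (L ++ [⟨i, a⟩]) = Word.prod ⟨L ++ [⟨i, a⟩], hne, hchain⟩ from rfl,
        prod_eq_prodList, equiv_prodList]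
    obtain ⟨c, t, hct⟩ := ih (prodList (L ++ [⟨i, a⟩])) i a hW'eq ha s
    refine ⟨c, t, ?_⟩
    have hu2 : u = Monoid.CoprodI.of b * prodList (L ++ [⟨i, a⟩]) := by
      rw [← prodList_equiv u, hu, prodList_cons]
    have hb1 : b ≠ 1 :=
      (Word.equiv u).ne_one ⟨j, b⟩ (by rw [hu]; exact List.mem_cons_self)
    set w₂ := Word.equiv (prodList (L ++ [⟨i, a⟩]) * s) with hw₂
    have hfst : w₂.fstIdx ≠ some j := by
      rw [Word.fstIdx_ne_iff]
      intro y hy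
      rw [hct] at hy
      cases L with
      | nil =>
        simp only [List.nil_append, List.head?_cons, Option.mem_def, Option.some.injEq] at hy
        subst hy
        simp only [List.nil_append] at hchain0
        exact (List.isChain_cons_cons.mp hchain0).1
      | cons z L' =>
        simp only [List.cons_append, List.head?_cons, Option.mem_def, Option.some.injEq] at hy
        subst hy
        simp only [List.cons_append] at hchain0
        exact (List.isChain_cons_cons.mp hchain0).1
    calc (Word.equiv (u * s)).toList
        = (Word.equiv (Monoid.CoprodI.of b * prodList w₂.toList)).toList := by
          rw [hu2, mul_assoc, hw₂, prodList_equiv]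
      _ = ⟨j, b⟩ :: w₂.toList := equiv_of_mul b w₂ hb1 hfst
      _ = (⟨j, b⟩ :: L) ++ ⟨i, a * c⟩ :: t := by rw [hct, List.cons_append]

lemma mem_principal_iff {u : Monoid.CoprodI M} {L : List (Σ i, M i)} {i : ι} {a : M i}
    (hu : (Word.equiv u).toList = L ++ [⟨i, a⟩]) (ha : ∀ c : M i, a * c ≠ 1)
    (w : Monoid.CoprodI M) :
    w ∈ RS1 {u} ↔ ∃ (c : M i) (t : List (Σ i, M i)),
      (Word.equiv w).toList = L ++ ⟨i, a * c⟩ :: t := by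
  rw [mem_RS1]
  simp only [Set.mem_singleton_iff, exists_eq_left]
  constructor
  · rintro ⟨s, rfl⟩
    exact mul_list L u i a hu ha s
  · rintro ⟨c, t, hw⟩
    refine ⟨Monoid.CoprodI.of c * prodList t, ?_⟩
    have h1 : u = prodList L * Monoid.CoprodI.of a := by
      rw [← prodList_equiv u, hu, prodList_append, prodList_cons]
      simp
    rw [← prodList_equiv w, hw, prodList_append, prodList_cons, h1]
    rw [map_mul]
    simp [mul_assoc, prodList]

lemma RS1_one_univ {S : Type*} [Monoid S] : RS1 ({1} : Set S) = Set.univ := by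
  ext w
  simp only [Set.mem_univ, iff_true]
  exact mem_RS1.2 ⟨1, rfl, w, (one_mul w).symm⟩

lemma RS1_singleton_subset {S : Type*} [Monoid S] {a b x : S} (h : b = a * x) :
    RS1 ({b} : Set S) ⊆ RS1 ({a} : Set S) := by
  intro w hw
  rcases mem_RS1.1 hw with ⟨y, hy, s, rfl⟩
  rw [Set.mem_singleton_iff] at hy
  subst hy
  exact mem_RS1.2 ⟨a, rfl, x * s, by rw [h, mul_assoc]⟩

lemma cleaning : ∀ (n : ℕ) (u : Monoid.CoprodI M), (Word.equiv u).toList.length ≤ n →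
    ∃ u', RS1 ({u} : Set (Monoid.CoprodI M)) = RS1 {u'} ∧
      (u' = 1 ∨ ∃ (L : List (Σ i, M i)) (i : ι) (a : M i),
        (Word.equiv u').toList = L ++ [⟨i, a⟩] ∧ ∀ c : M i, a * c ≠ 1) := by
  intro n
  induction n with
  | zero =>
    intro u hlen
    have h0 : (Word.equiv u).toList = [] := List.length_eq_zero_iff.mp (Nat.le_zero.mp hlen)
    have : u = 1 := by rw [← prodList_equiv u, h0, prodList_nil]
    exact ⟨u, rfl, Or.inl this⟩
  | succ n ih =>
    intro u hlen
    rcases List.eq_nil_or_concat (Word.equiv u).toList with h0 | ⟨L, x, h⟩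
    · have : u = 1 := by rw [← prodList_equiv u, h0, prodList_nil]
      exact ⟨u, rfl, Or.inl this⟩
    · obtain ⟨i, a⟩ := x
      rw [List.concat_eq_append] at h
      by_cases hinv : ∃ c : M i, a * c = 1
      · obtain ⟨c, hc⟩ := hinv
        have hne : ∀ l ∈ L, Sigma.snd l ≠ 1 := fun l hl =>
          (Word.equiv u).ne_one l (by rw [h]; exact List.mem_append_left _ hl)
        have hchain : L.IsChain (fun l l' => Sigma.fst l ≠ Sigma.fst l') := by
          have := (Word.equiv u).chain_ne
          rw [h] at this
          exact (List.isChain_append.mp this).1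
        have h2 : u * Monoid.CoprodI.of c = prodList L := by
          rw [← prodList_equiv u, h, prodList_append, prodList_cons, prodList_nil, mul_one,
            mul_assoc, ← map_mul, hc, map_one, mul_one]
        have h3 : (Word.equiv (u * Monoid.CoprodI.of c)).toList = L := by
          rw [h2, show prodList L = Word.prod ⟨L, hne, hchain⟩ from rfl,
            prod_eq_prodList, equiv_prodList]
        have hlen2 : (Word.equiv (u * Monoid.CoprodI.of c)).toList.length ≤ n := by
          rw [h3]
          have := congrArg List.length h
          simp only [List.length_append, List.length_cons, List.length_nil] at this
          omega
        obtain ⟨u', hRS, hcl⟩ := ih (u * Monoid.CoprodI.of c) hlen2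
        refine ⟨u', ?_, hcl⟩
        rw [← hRS]
        apply Set.Subset.antisymm
        · apply RS1_singleton_subset (x := Monoid.CoprodI.of a)
          rw [h2, ← prodList_equiv u, h, prodList_append, prodList_cons, prodList_nil, mul_one]
        · exact RS1_singleton_subset rfl
      · push_neg at hinv
        exact ⟨u, rfl, Or.inr ⟨L, i, a, h, hinv⟩⟩

end Coprod

section Key

open Monoid Monoid.CoprodI Monoid.CoprodI.Word

set_option linter.unusedSectionVars false
variable {ι : Type*} {M : ι → Type*} [DecidableEq ι] [∀ i, Monoid (M i)]
  [∀ i, DecidableEq (M i)]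

lemma key_le {u v : Monoid.CoprodI M} {L L' : List (Σ i, M i)} {i i' : ι} {a : M i} {a' : M i'}
    (hu : (Word.equiv u).toList = L ++ [⟨i, a⟩]) (ha : ∀ c : M i, a * c ≠ 1)
    (hv : (Word.equiv v).toList = L' ++ [⟨i', a'⟩]) (ha' : ∀ c : M i', a' * c ≠ 1)
    (hlen : L.length ≤ L'.length) (hrih : RIH (M i)) :
    FGRightIdeal (RS1 {u} ∩ RS1 {v}) := by
  have hmemu := mem_principal_iff hu ha
  have hmemv := mem_principal_iff hv ha'
  have huL : u = prodList L * Monoid.CoprodI.of a := by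
    rw [← prodList_equiv u, hu, prodList_append, prodList_cons, prodList_nil, mul_one]
  have hvL : v = prodList L' * Monoid.CoprodI.of a' := by
    rw [← prodList_equiv v, hv, prodList_append, prodList_cons, prodList_nil, mul_one]
  rcases lt_or_eq_of_le hlen with hlt | heq
  · -- strictly shorter
    by_cases hpre : L'.take L.length = L ∧ ∃ c₀ : M i, L'[L.length]'hlt = ⟨i, a * c₀⟩
    · obtain ⟨htake, c₀, hget⟩ := hpre
      have hsub : RS1 {v} ⊆ RS1 {u} := by
        intro w hw
        obtain ⟨c', t', hw'⟩ := (hmemv w).1 hw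
        refine (hmemu w).2 ⟨c₀, L'.drop (L.length + 1) ++ ⟨i', a' * c'⟩ :: t', ?_⟩
        rw [hw']
        conv_lhs => rw [← List.take_append_drop L.length L']
        rw [htake, List.drop_eq_getElem_cons hlt, hget]
        simp
      rw [Set.inter_eq_right.mpr hsub]
      exact FG_principal v
    · have hempty : RS1 {u} ∩ RS1 {v} = (∅ : Set (Monoid.CoprodI M)) := by
        ext w
        simp only [Set.mem_inter_iff, Set.mem_empty_iff_false, iff_false, not_and]
        intro hw1 hw2
        obtain ⟨c, t, h1⟩ := (hmemu w).1 hw1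
        obtain ⟨c', t', h2⟩ := (hmemv w).1 hw2
        apply hpre
        have h3 : L' ++ ⟨i', a' * c'⟩ :: t' = L ++ ⟨i, a * c⟩ :: t := by rw [← h1, ← h2]
        constructor
        · have h4 := congrArg (List.take L.length) h3
          rwa [List.take_append_of_le_length hlt.le,
            List.take_append_of_le_length le_rfl, List.take_length] at h4
        · have h5 := congrArg (fun l => l[L.length]?) h3
          rw [List.getElem?_append_left hlt] at h5
          rw [List.getElem?_append_right le_rfl] at h5
          simp only [Nat.sub_self, List.getElem?_cons_zero] at h5
          rw [List.getElem?_eq_getElem hlt] at h5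
          exact ⟨c, Option.some_injective _ h5⟩
      rw [hempty]
      exact FG_empty
  · -- equal lengths
    have htakeeq : ∀ w : Monoid.CoprodI M, w ∈ RS1 {u} → w ∈ RS1 {v} → L = L' := by
      intro w hw1 hw2
      obtain ⟨c, t, h1⟩ := (hmemu w).1 hw1
      obtain ⟨c', t', h2⟩ := (hmemv w).1 hw2
      have h3 : L ++ ⟨i, a * c⟩ :: t = L' ++ ⟨i', a' * c'⟩ :: t' := by rw [← h1, ← h2]
      have h4 := congrArg (List.take L.length) h3
      rwa [List.take_append_of_le_length le_rfl, List.take_length, heq,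
        List.take_append_of_le_length le_rfl, List.take_length] at h4
    by_cases hLL : L = L'
    · subst hLL
      by_cases hii : i = i'
      · subst hii
        obtain ⟨Z, hZ⟩ := hrih (RS1 {a}) (RS1 {a'}) (FG_principal a) (FG_principal a')
        classical
        refine ⟨Z.image (fun z => prodList L * Monoid.CoprodI.of z), ?_⟩
        ext w
        simp only [Set.mem_inter_iff]
        constructor
        · rintro ⟨hw1, hw2⟩
          obtain ⟨c, t, h1⟩ := (hmemu w).1 hw1
          obtain ⟨c', t', h2⟩ := (hmemv w).1 hw2
          rw [h1] at h2
          have h3 : (⟨i, a * c⟩ : Σ i, M i) :: t = ⟨i, a' * c'⟩ :: t' :=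
            List.append_cancel_left h2
          have h4 : a * c = a' * c' := by
            have := (List.cons.injEq _ _ _ _).mp h3 |>.1
            simpa using this
          have hm : a * c ∈ RS1 ({a} : Set (M i)) ∩ RS1 {a'} := by
            constructor
            · exact mem_RS1.2 ⟨a, rfl, c, rfl⟩
            · exact mem_RS1.2 ⟨a', rfl, c', h4⟩
          rw [hZ] at hm
          rcases mem_RS1.1 hm with ⟨z, hz, d, hzd⟩
          refine mem_RS1.2 ⟨prodList L * Monoid.CoprodI.of z, ?_,
            Monoid.CoprodI.of d * prodList t, ?_⟩
          · simp only [Finset.coe_image, Set.mem_image, Finset.mem_coe]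
            exact ⟨z, hz, rfl⟩
          · rw [← prodList_equiv w, h1, prodList_append, prodList_cons, hzd, map_mul]
            simp [mul_assoc, prodList]
        · intro hw
          rcases mem_RS1.1 hw with ⟨g, hg, s, rfl⟩
          simp only [Finset.coe_image, Set.mem_image, Finset.mem_coe] at hg
          obtain ⟨z, hz, rfl⟩ := hg
          have hzK : z ∈ RS1 ({a} : Set (M i)) ∩ RS1 {a'} := by
            rw [hZ]
            exact mem_RS1_self hz
          rcases mem_RS1.1 hzK.1 with ⟨x, hx, d₁, hd₁⟩
          rcases mem_RS1.1 hzK.2 with ⟨y, hy, d₂, hd₂⟩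
          rw [Set.mem_singleton_iff] at hx hy
          subst hx; subst hy
          constructor
          · refine mem_RS1.2 ⟨u, rfl, Monoid.CoprodI.of d₁ * s, ?_⟩
            rw [huL, hd₁, map_mul]
            simp [mul_assoc]
          · refine mem_RS1.2 ⟨v, rfl, Monoid.CoprodI.of d₂ * s, ?_⟩
            rw [hvL, hd₂, map_mul]
            simp [mul_assoc]
      · -- different last indices, L = L' : empty intersection
        have hempty : RS1 {u} ∩ RS1 {v} = (∅ : Set (Monoid.CoprodI M)) := by
          ext w
          simp only [Set.mem_inter_iff, Set.mem_empty_iff_false, iff_false, not_and]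
          intro hw1 hw2
          obtain ⟨c, t, h1⟩ := (hmemu w).1 hw1
          obtain ⟨c', t', h2⟩ := (hmemv w).1 hw2
          rw [h1] at h2
          have h3 : (⟨i, a * c⟩ : Σ i, M i) :: t = ⟨i', a' * c'⟩ :: t' :=
            List.append_cancel_left h2
          have h4 : i = i' := congrArg Sigma.fst ((List.cons.injEq _ _ _ _).mp h3).1
          exact hii h4
        rw [hempty]
        exact FG_empty
    · have hempty : RS1 {u} ∩ RS1 {v} = (∅ : Set (Monoid.CoprodI M)) := by
        ext w
        simp only [Set.mem_inter_iff, Set.mem_empty_iff_false, iff_false, not_and]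
        intro hw1 hw2
        exact hLL (htakeeq w hw1 hw2)
      rw [hempty]
      exact FG_empty

lemma principal_inter_fg (hall : ∀ i, RIH (M i)) (u v : Monoid.CoprodI M) :
    FGRightIdeal (RS1 {u} ∩ RS1 {v}) := by
  obtain ⟨u', huv, hu'⟩ := cleaning (Word.equiv u).toList.length u le_rfl
  obtain ⟨v', hvv, hv'⟩ := cleaning (Word.equiv v).toList.length v le_rfl
  rw [huv, hvv]
  rcases hu' with rfl | ⟨L, i, a, hL, ha⟩
  · rw [RS1_one_univ, Set.univ_inter]
    exact FG_principal v'
  rcases hv' with rfl | ⟨L', i', a', hL', ha'⟩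
  · rw [RS1_one_univ, Set.inter_univ]
    exact FG_principal u'
  rcases le_total L.length L'.length with h | h
  · exact key_le hL ha hL' ha' h (hall i)
  · rw [Set.inter_comm]
    exact key_le hL' ha' hL ha h (hall i')

end Key


theorem stmt8 {ι : Type*} (M : ι → Type*) [∀ i, Monoid (M i)] :
    RIH (Monoid.CoprodI M) ↔ ∀ i, RIH (M i) := by
  classical
  constructor
  · intro h i
    refine rih_retract (Monoid.CoprodI.lift fun j =>
      if hj : j = i then
        { toFun := fun m => hj ▸ m
          map_one' := by subst hj; rfl
          map_mul' := by subst hj; intros; rfl }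
      else (1 : M j →* M i)) Monoid.CoprodI.of ?_ h
    intro t
    rw [Monoid.CoprodI.lift_of]
    simp
  · intro h
    exact rih_of_principal (fun u v => principal_inter_fg h u v)
end

section
/- Let S be a semigroup. Then the semigroup S⁰ obtained from S by adjoining a zero element is finitely right equated if and only if S is finitely right equated and S = US¹ for some finite set U ⊆ S. -/
/-- The right annihilator congruence `r_S(a) = {(s,t) : a*s = a*t}`. -/
def rAnn {S : Type*} [Semigroup S] (a : S) : S → S → Prop :=
  fun s t => a * s = a * t

/-- A right congruence on a semigroup: an equivalence relation compatible with
right multiplication. -/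
def IsRightCong {S : Type*} [Semigroup S] (ρ : S → S → Prop) : Prop :=
  Equivalence ρ ∧ ∀ a b s : S, ρ a b → ρ (a * s) (b * s)

/-- The smallest right congruence containing the relation `X`. -/
def rcGen {S : Type*} [Semigroup S] (X : S → S → Prop) : S → S → Prop :=
  fun a b => ∀ ρ : S → S → Prop, IsRightCong ρ → (∀ x y, X x y → ρ x y) → ρ a b

/-- A right congruence is finitely generated if it is generated by a finite
set of pairs. -/
def FGRightCong {S : Type*} [Semigroup S] (ρ : S → S → Prop) : Prop :=
  ∃ X : Finset (S × S), ρ = rcGen (fun a b => (a, b) ∈ X)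

/-- A semigroup is finitely right equated if every right annihilator
congruence is finitely generated. -/
def FRE (S : Type*) [Semigroup S] : Prop :=
  ∀ a : S, FGRightCong (rAnn a)

section Aux
variable {S : Type*} [Semigroup S]

lemma rcGen_of {X : S → S → Prop} {a b : S} (h : X a b) : rcGen X a b :=
  fun _ _ hX => hX a b h

lemma rcGen_le {X ρ : S → S → Prop} (hρ : IsRightCong ρ)
    (hX : ∀ x y, X x y → ρ x y) {a b : S} (h : rcGen X a b) : ρ a b :=
  h ρ hρ hX

lemma rAnn_isRightCong (a : S) : IsRightCong (rAnn a) := by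
  refine ⟨⟨fun _ => rfl, Eq.symm, Eq.trans⟩, fun x y s h => ?_⟩
  show a * (x * s) = a * (y * s)
  rw [← mul_assoc, ← mul_assoc, h]

lemma wz_cases (x : WithZero S) : x = 0 ∨ ∃ s : S, x = ↑s := by
  induction x using WithZero.recZeroCoe with
  | zero => left; rfl
  | coe s => right; exact ⟨s, rfl⟩

lemma wz_mul_ne_zero (a b : S) : (↑a : WithZero S) * ↑b ≠ 0 := by
  rw [← WithZero.coe_mul]; exact WithZero.coe_ne_zero

/-- Extension of a relation on `S` to `WithZero S`. -/
def extRel (ρ : S → S → Prop) : WithZero S → WithZero S → Prop :=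
  fun x y => (x = 0 ∧ y = 0) ∨ ∃ s t : S, x = ↑s ∧ y = ↑t ∧ ρ s t

lemma extRel_isRightCong {ρ : S → S → Prop} (hρ : IsRightCong ρ) :
    IsRightCong (extRel ρ) := by
  constructor
  · constructor
    · intro x
      rcases wz_cases x with h | ⟨s, rfl⟩
      · exact Or.inl ⟨h, h⟩
      · exact Or.inr ⟨s, s, rfl, rfl, hρ.1.refl s⟩
    · rintro x y (⟨rfl, rfl⟩ | ⟨s, t, rfl, rfl, h⟩)
      · exact Or.inl ⟨rfl, rfl⟩
      · exact Or.inr ⟨t, s, rfl, rfl, hρ.1.symm h⟩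
    · rintro x y z (⟨rfl, rfl⟩ | ⟨s, t, rfl, rfl, h⟩) h2
      · exact h2
      · rcases h2 with ⟨h0, rfl⟩ | ⟨t', u, ht', rfl, h'⟩
        · exact absurd h0 WithZero.coe_ne_zero
        · rw [WithZero.coe_inj] at ht'; subst ht'
          exact Or.inr ⟨s, u, rfl, rfl, hρ.1.trans h h'⟩
  · rintro x y w (⟨rfl, rfl⟩ | ⟨s, t, rfl, rfl, h⟩)
    · exact Or.inl ⟨zero_mul w, zero_mul w⟩
    · rcases wz_cases w with rfl | ⟨v, rfl⟩
      · exact Or.inl ⟨mul_zero _, mul_zero _⟩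
      · exact Or.inr ⟨s * v, t * v, (WithZero.coe_mul s v).symm,
          (WithZero.coe_mul t v).symm, hρ.2 s t v h⟩

end Aux

theorem stmt17 {S : Type*} [Semigroup S] :
    FRE (WithZero S) ↔
      (FRE S ∧ ∃ U : Finset S, RS1 (↑U : Set S) = Set.univ) := by
  classical
  constructor
  · intro h
    constructor
    · -- FRE S
      intro a
      obtain ⟨Y, hY⟩ := h (↑a : WithZero S)
      have hYmem : ∀ p ∈ Y, (↑a : WithZero S) * p.1 = ↑a * p.2 := by
        intro p hp
        have : rcGen (fun x y => (x, y) ∈ Y) p.1 p.2 := rcGen_of hp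
        rw [← hY] at this; exact this
      set f : WithZero S → S := fun x => WithZero.recZeroCoe a id x with hf
      have hfc : ∀ s : S, f ↑s = s := fun s => rfl
      refine ⟨Y.image (fun p => (f p.1, f p.2)), ?_⟩
      funext s t
      apply propext
      constructor
      · intro hst ρ hρ hX
        -- extend ρ to WithZero S
        have hext : IsRightCong (extRel ρ) := extRel_isRightCong hρ
        have hcont : ∀ x y : WithZero S, (x, y) ∈ Y → extRel ρ x y := by
          intro x y hxy
          have hax := hYmem (x, y) hxy
          rcases wz_cases x with rfl | ⟨s', rfl⟩
          · rcases wz_cases y with rfl | ⟨t', rfl⟩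
            · exact Or.inl ⟨rfl, rfl⟩
            · rw [mul_zero] at hax
              exact absurd hax.symm (wz_mul_ne_zero a t')
          · rcases wz_cases y with rfl | ⟨t', rfl⟩
            · rw [mul_zero] at hax
              exact absurd hax (wz_mul_ne_zero a s')
            · refine Or.inr ⟨s', t', rfl, rfl, hX s' t' ?_⟩
              have : ((s' : WithZero S), (t' : WithZero S)) ∈ Y := hxy
              exact Finset.mem_image.mpr ⟨(↑s', ↑t'), this, by rw [hfc, hfc]⟩
        have hst' : (↑a : WithZero S) * ↑s = ↑a * ↑t := by
          rw [← WithZero.coe_mul, ← WithZero.coe_mul, hst]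
        have : rcGen (fun x y => (x, y) ∈ Y) ↑s ↑t := by rw [← hY]; exact hst'
        have := this (extRel ρ) hext hcont
        rcases this with ⟨h0, _⟩ | ⟨s', t', hs', ht', hρ'⟩
        · exact absurd h0 WithZero.coe_ne_zero
        · rw [WithZero.coe_inj] at hs' ht'
          subst hs'; subst ht'; exact hρ'
      · intro hgen
        refine rcGen_le (rAnn_isRightCong a) ?_ hgen
        intro x y hxy
        obtain ⟨p, hp, hfp⟩ := Finset.mem_image.mp hxy
        have hax := hYmem p hp
        rcases wz_cases p.1 with h1 | ⟨s', h1⟩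
        · rcases wz_cases p.2 with h2 | ⟨t', h2⟩
          · rw [h1, h2] at hfp
            obtain ⟨rfl, rfl⟩ : a = x ∧ a = y := Prod.mk.injEq .. ▸ hfp
            rfl
          · rw [h1, h2, mul_zero] at hax
            exact absurd hax.symm (wz_mul_ne_zero a t')
        · rcases wz_cases p.2 with h2 | ⟨t', h2⟩
          · rw [h1, h2, mul_zero] at hax
            exact absurd hax (wz_mul_ne_zero a s')
          · rw [h1, h2] at hfp hax
            rw [hfc, hfc] at hfp
            rw [← WithZero.coe_mul, ← WithZero.coe_mul, WithZero.coe_inj] at hax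
            obtain ⟨rfl, rfl⟩ : s' = x ∧ t' = y := Prod.mk.injEq .. ▸ hfp
            exact hax
    · -- S = US¹
      obtain ⟨X, hX⟩ := h 0
      set g : WithZero S → Finset S := fun x => WithZero.recZeroCoe ∅ (fun s => {s}) x with hg
      refine ⟨X.biUnion (fun p => g p.1 ∪ g p.2), ?_⟩
      set U : Finset S := X.biUnion (fun p => g p.1 ∪ g p.2) with hUdef
      apply Set.eq_univ_iff_forall.mpr
      intro s
      by_contra hs
      -- the collapsing congruence
      set D : Set (WithZero S) :=
        {x | x = 0 ∨ ∃ u : S, x = ↑u ∧ u ∈ RS1 (↑U : Set S)} with hD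
      have hDmul : ∀ x ∈ D, ∀ w : WithZero S, x * w ∈ D := by
        rintro x (rfl | ⟨u, rfl, hu⟩) w
        · exact Or.inl (zero_mul w)
        · rcases wz_cases w with rfl | ⟨v, rfl⟩
          · exact Or.inl (mul_zero _)
          · refine Or.inr ⟨u * v, (WithZero.coe_mul u v).symm, ?_⟩
            rcases hu with hu | ⟨x', hx', t', rfl⟩
            · exact Or.inr ⟨u, hu, v, rfl⟩
            · exact Or.inr ⟨x', hx', t' * v, mul_assoc x' t' v⟩
      set ρ : WithZero S → WithZero S → Prop :=
        fun x y => x = y ∨ (x ∈ D ∧ y ∈ D) with hρdef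
      have hρ : IsRightCong ρ := by
        constructor
        · constructor
          · intro x; exact Or.inl rfl
          · rintro x y (rfl | ⟨h1, h2⟩)
            · exact Or.inl rfl
            · exact Or.inr ⟨h2, h1⟩
          · rintro x y z (rfl | ⟨h1, h2⟩) h3
            · exact h3
            · rcases h3 with rfl | ⟨h3, h4⟩
              · exact Or.inr ⟨h1, h2⟩
              · exact Or.inr ⟨h1, h4⟩
        · rintro x y w (rfl | ⟨h1, h2⟩)
          · exact Or.inl rfl
          · exact Or.inr ⟨hDmul x h1 w, hDmul y h2 w⟩
      have hcoordU : ∀ (u : S) (x : WithZero S), x = ↑u →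
          (∀ p ∈ X, p.1 = x ∨ p.2 = x → u ∈ U) := by
        intro u x hx p hp hor
        apply Finset.mem_biUnion.mpr
        refine ⟨p, hp, ?_⟩
        rcases hor with h1 | h2
        · apply Finset.mem_union_left
          rw [h1, hx]
          exact Finset.mem_singleton_self u
        · apply Finset.mem_union_right
          rw [h2, hx]
          exact Finset.mem_singleton_self u
      have hcont : ∀ x y : WithZero S, (x, y) ∈ X → ρ x y := by
        intro x y hxy
        refine Or.inr ⟨?_, ?_⟩
        · rcases wz_cases x with rfl | ⟨u, hu⟩
          · exact Or.inl rfl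
          · refine Or.inr ⟨u, hu, Or.inl ?_⟩
            exact Finset.mem_coe.mpr (hcoordU u x hu (x, y) hxy (Or.inl rfl))
        · rcases wz_cases y with rfl | ⟨u, hu⟩
          · exact Or.inl rfl
          · refine Or.inr ⟨u, hu, Or.inl ?_⟩
            exact Finset.mem_coe.mpr (hcoordU u y hu (x, y) hxy (Or.inr rfl))
      have h0s : rAnn (0 : WithZero S) 0 ↑s := by
        show (0 : WithZero S) * 0 = 0 * ↑s
        rw [zero_mul, zero_mul]
      rw [hX] at h0s
      have := h0s ρ hρ hcont
      rcases this with h | ⟨_, hsD⟩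
      · exact WithZero.coe_ne_zero h.symm
      · rcases hsD with h | ⟨u, hu, hmem⟩
        · exact WithZero.coe_ne_zero h
        · rw [WithZero.coe_inj] at hu
          subst hu
          exact hs hmem
  · rintro ⟨hFRE, U, hU⟩
    intro x
    rcases wz_cases x with rfl | ⟨b, rfl⟩
    · -- annihilator of 0 is everything
      refine ⟨U.image (fun u : S => ((0 : WithZero S), (↑u : WithZero S))), ?_⟩
      funext x y
      apply propext
      constructor
      · intro _ ρ hρ hX
        have key : ∀ z : WithZero S, ρ 0 z := by
          intro z
          rcases wz_cases z with rfl | ⟨t, rfl⟩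
          · exact hρ.1.refl 0
          · have ht : t ∈ RS1 (↑U : Set S) := by rw [hU]; trivial
            rcases ht with ht | ⟨u, hu, v, rfl⟩
            · refine hX 0 ↑t ?_
              simp only [Finset.mem_image]
              exact ⟨t, Finset.mem_coe.mp ht, rfl⟩
            · have h1 : ρ 0 ↑u := hX 0 ↑u (by
                simp only [Finset.mem_image]
                exact ⟨u, Finset.mem_coe.mp hu, rfl⟩)
              have h2 := hρ.2 0 ↑u ↑v h1
              rw [zero_mul, ← WithZero.coe_mul] at h2
              exact h2
        exact hρ.1.trans (hρ.1.symm (key x)) (key y)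
      · intro _
        show (0 : WithZero S) * x = 0 * y
        rw [zero_mul, zero_mul]
    · obtain ⟨X, hX⟩ := hFRE b
      have hXmem : ∀ p ∈ X, b * p.1 = b * p.2 := by
        intro p hp
        have : rcGen (fun x y => (x, y) ∈ X) p.1 p.2 := rcGen_of hp
        rw [← hX] at this; exact this
      refine ⟨X.image (fun p => ((↑p.1 : WithZero S), (↑p.2 : WithZero S))), ?_⟩
      funext x y
      apply propext
      constructor
      · intro hxy ρ hρ hXh
        have hxy' : (↑b : WithZero S) * x = ↑b * y := hxy
        rcases wz_cases x with rfl | ⟨s', rfl⟩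
        · rcases wz_cases y with rfl | ⟨t', rfl⟩
          · exact hρ.1.refl 0
          · rw [mul_zero] at hxy'
            exact absurd hxy'.symm (wz_mul_ne_zero b t')
        · rcases wz_cases y with rfl | ⟨t', rfl⟩
          · rw [mul_zero] at hxy'
            exact absurd hxy' (wz_mul_ne_zero b s')
          · rw [← WithZero.coe_mul, ← WithZero.coe_mul, WithZero.coe_inj] at hxy'
            have hgen : rcGen (fun a c => (a, c) ∈ X) s' t' := by
              rw [← hX]; exact hxy'
            -- restrict ρ to S
            set ρ' : S → S → Prop := fun a c => ρ ↑a ↑c with hρ'def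
            have hρ' : IsRightCong ρ' := by
              constructor
              · exact ⟨fun a => hρ.1.refl ↑a, fun h => hρ.1.symm h,
                  fun h1 h2 => hρ.1.trans h1 h2⟩
              · intro a c w hac
                show ρ ↑(a * w) ↑(c * w)
                rw [WithZero.coe_mul, WithZero.coe_mul]
                exact hρ.2 ↑a ↑c ↑w hac
            refine hgen ρ' hρ' ?_
            intro a c hac
            exact hXh ↑a ↑c (Finset.mem_image.mpr ⟨(a, c), hac, rfl⟩)
      · intro hgen
        refine rcGen_le (rAnn_isRightCong (↑b : WithZero S)) ?_ hgen
        intro x' y' hxy'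
        obtain ⟨p, hp, hfp⟩ := Finset.mem_image.mp hxy'
        obtain ⟨rfl, rfl⟩ : (↑p.1 : WithZero S) = x' ∧ (↑p.2 : WithZero S) = y' :=
          Prod.mk.injEq .. ▸ hfp
        show (↑b : WithZero S) * ↑p.1 = ↑b * ↑p.2
        rw [← WithZero.coe_mul, ← WithZero.coe_mul, WithZero.coe_inj]
        exact hXmem p hp
end
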